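/- Let G be a finite group and 𝒩 a regular subgroup of Perm(G). Then 𝒩 is normalized by the left regular representation λ(G) if and only if its centralizer 𝒩* in Perm(G) is normalized by λ(G). -/

import Mathlib

/-- A subgroup `𝒟` of `Perm G` is regular if evaluation at `1` is a bijection `𝒟 → G`. -/
def IsRegularSubgroup (G : Type*) [Group G] (𝒟 : Subgroup (Equiv.Perm G)) : Prop :=
  Function.Bijective (fun δ : ↥𝒟 => (δ : Equiv.Perm G) 1)

/-- If `g` normalizes `H` then `g` normalizes the centralizer of `H`. -/
lemma normalizes_centralizer_of_normalizes {M : Type*} [Group M] {H : Subgroup M} {g : M}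
    (hg : g ∈ Subgroup.normalizer (H : Set M)) :
    g ∈ Subgroup.normalizer ((Subgroup.centralizer (H : Set M)) : Set M) := by
  rw [Subgroup.mem_normalizer_iff''] at hg ⊢
  intro c
  simp only [Subgroup.mem_centralizer_iff, SetLike.mem_coe]
  constructor
  · intro hc h hH
    have h' : g * h * g⁻¹ ∈ H := by
      have := (hg (g * h * g⁻¹)).mpr
      simpa [mul_assoc] using this (by simpa [mul_assoc] using hH)
    have := hc _ h'
    have : g * h * g⁻¹ * c = c * (g * h * g⁻¹) := this
    calc h * (g⁻¹ * c * g) = g⁻¹ * (g * h * g⁻¹ * c) * g := by group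
    _ = g⁻¹ * (c * (g * h * g⁻¹)) * g := by rw [this]
    _ = g⁻¹ * c * g * h := by group
  · intro hc h hH
    have h' : g⁻¹ * h * g ∈ H := (hg h).mp hH
    have := hc _ h'
    calc h * c = g * ((g⁻¹ * h * g) * (g⁻¹ * c * g)) * g⁻¹ := by group
    _ = g * ((g⁻¹ * c * g) * (g⁻¹ * h * g)) * g⁻¹ := by rw [this]
    _ = c * h := by group

section

variable {G : Type*} [Group G] (𝒩 : Subgroup (Equiv.Perm G)) (hreg : IsRegularSubgroup G 𝒩)

set_option autoImplicit false

noncomputable def regEquiv : ↥𝒩 ≃ G := Equiv.ofBijective _ hreg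

lemma regEquiv_apply (ν : ↥𝒩) : regEquiv 𝒩 hreg ν = (ν : Equiv.Perm G) 1 := rfl

lemma regEquiv_one : regEquiv 𝒩 hreg 1 = 1 := rfl

/-- the "right translation" by `μ` -/
noncomputable def rperm (μ : ↥𝒩) : Equiv.Perm G :=
  ((regEquiv 𝒩 hreg).symm.trans ((Equiv.mulRight μ).trans (regEquiv 𝒩 hreg)))

lemma rperm_apply (μ : ↥𝒩) (x : G) :
    rperm 𝒩 hreg μ x = regEquiv 𝒩 hreg ((regEquiv 𝒩 hreg).symm x * μ) := rfl

lemma regEquiv_mul (ν μ : ↥𝒩) :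
    regEquiv 𝒩 hreg (ν * μ) = (ν : Equiv.Perm G) (regEquiv 𝒩 hreg μ) := by
  simp [regEquiv_apply]

lemma rperm_mem_centralizer (μ : ↥𝒩) :
    rperm 𝒩 hreg μ ∈ Subgroup.centralizer (𝒩 : Set (Equiv.Perm G)) := by
  rw [Subgroup.mem_centralizer_iff]
  intro ν hν
  ext x
  have key : (regEquiv 𝒩 hreg).symm (ν x)
      = (⟨ν, hν⟩ : ↥𝒩) * (regEquiv 𝒩 hreg).symm x := by
    apply (regEquiv 𝒩 hreg).injective
    rw [Equiv.apply_symm_apply, regEquiv_mul, Equiv.apply_symm_apply]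
  simp only [Equiv.Perm.mul_apply, rperm_apply]
  rw [key, mul_assoc, regEquiv_mul]
  simp [regEquiv_mul]

lemma regEquiv_symm_one : (regEquiv 𝒩 hreg).symm 1 = 1 := by
  apply (regEquiv 𝒩 hreg).injective
  rw [Equiv.apply_symm_apply, regEquiv_one]

lemma rperm_one (μ : ↥𝒩) : rperm 𝒩 hreg μ 1 = regEquiv 𝒩 hreg μ := by
  rw [rperm_apply, regEquiv_symm_one, one_mul]

lemma centralizer_centralizer_eq (hreg : IsRegularSubgroup G 𝒩) :
    Subgroup.centralizer ((Subgroup.centralizer (𝒩 : Set (Equiv.Perm G))) :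
      Set (Equiv.Perm G)) = 𝒩 := by
  apply le_antisymm
  · intro σ hσ
    set e := regEquiv 𝒩 hreg with he
    set ν := e.symm (σ 1) with hν
    have hσν : σ = (ν : Equiv.Perm G) := by
      ext x
      have hcomm := Subgroup.mem_centralizer_iff.mp hσ _
        (rperm_mem_centralizer 𝒩 hreg (e.symm x))
      have hc1 : σ (rperm 𝒩 hreg (e.symm x) 1) = rperm 𝒩 hreg (e.symm x) (σ 1) := by
        have := congrArg (fun p => (p : Equiv.Perm G) 1) hcomm
        simpa using this.symm
      calc σ x = σ (rperm 𝒩 hreg (e.symm x) 1) := by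
            rw [rperm_one, he, Equiv.apply_symm_apply]
        _ = rperm 𝒩 hreg (e.symm x) (σ 1) := hc1
        _ = e (ν * e.symm x) := by rw [rperm_apply, ← hν]
        _ = (ν : Equiv.Perm G) (e (e.symm x)) := regEquiv_mul ..
        _ = (ν : Equiv.Perm G) x := by rw [Equiv.apply_symm_apply]
    rw [hσν]; exact ν.2
  · intro ν hν
    rw [Subgroup.mem_centralizer_iff]
    intro c hc
    exact (Subgroup.mem_centralizer_iff.mp hc ν hν).symm

end

/-- A regular subgroup `𝒩` of `Perm G` is normalized by the left regular representation
`λ(G)` if and only if its centralizer `𝒩*` in `Perm G` is normalized by `λ(G)`. -/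
theorem stmt17 {G : Type*} [Group G] [Finite G]
    (𝒩 : Subgroup (Equiv.Perm G)) (hreg : IsRegularSubgroup G 𝒩) :
    (∀ γ : G, (Equiv.mulLeft γ : Equiv.Perm G) ∈ Subgroup.normalizer (𝒩 : Set (Equiv.Perm G))) ↔
      (∀ γ : G, (Equiv.mulLeft γ : Equiv.Perm G) ∈
        Subgroup.normalizer
          ((Subgroup.centralizer (𝒩 : Set (Equiv.Perm G)) : Set (Equiv.Perm G)))) := by
  constructor
  · intro h γ
    exact normalizes_centralizer_of_normalizes (h γ)
  · intro h γ
    have := normalizes_centralizer_of_normalizes (h γ)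
    rwa [centralizer_centralizer_eq 𝒩 hreg] at this
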